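/- Let R = k[X,Y,Z] be a polynomial ring over a field k and let I = (X^2, XY, Y^2, Z^c, X*Z^a, Y*Z^b) where 1 ≤ a ≤ b and c ≥ 2 are integers. If b > ⌈c/2⌉, then the monomial Y*Z^{⌈c/2⌉} lies in the integral closure of I but not in I; in particular I is not integrally closed. -/
import Mathlib


/-- `r` is integral over the ideal `I`: it satisfies an equation
`r^m + a_1 r^(m-1) + ... + a_m = 0` with `a_j ∈ I^j`. -/
def IsIntegralOverIdeal {R : Type*} [CommRing R] (I : Ideal R) (r : R) : Prop :=
  ∃ m : ℕ, 0 < m ∧ ∃ a : ℕ → R, (∀ j ∈ Finset.Icc 1 m, a j ∈ I ^ j) ∧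
    r ^ m + ∑ j ∈ Finset.Icc 1 m, a j * r ^ (m - j) = 0

/-- An ideal is integrally closed if it contains every element integral over it. -/
def Ideal.IsIntClosed {R : Type*} [CommRing R] (I : Ideal R) : Prop :=
  ∀ r, IsIntegralOverIdeal I r → r ∈ I

lemma aux_mono {k : Type*} [Field k] (r : MvPolynomial (Fin 3) k) (e m : Fin 3 →₀ ℕ)
    (h : ¬ e ≤ m) : MvPolynomial.coeff m (r * MvPolynomial.monomial e 1) = 0 := by
  rw [MvPolynomial.coeff_mul_monomial', if_neg h]

open MvPolynomial in
theorem stmt_2 {k : Type*} [Field k] (a b c : ℕ) (ha : 1 ≤ a) (hab : a ≤ b)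
    (hc : 2 ≤ c) (hb : (c + 1) / 2 < b)
    (I : Ideal (MvPolynomial (Fin 3) k))
    (hI : I = Ideal.span {X 0 ^ 2, X 0 * X 1, X 1 ^ 2, X 2 ^ c,
      X 0 * X 2 ^ a, X 1 * X 2 ^ b}) :
    IsIntegralOverIdeal I (X 1 * X 2 ^ ((c + 1) / 2)) ∧
      X 1 * X 2 ^ ((c + 1) / 2) ∉ I ∧ ¬ I.IsIntClosed := by
  set d := (c + 1) / 2 with hd
  have hdc : d < c := by omega
  have h2d : c ≤ 2 * d := by omega
  -- Part 1 : integrality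
  have hint : IsIntegralOverIdeal I (X 1 * X 2 ^ d) := by
    refine ⟨2, by norm_num, fun j => if j = 2 then -((X 1 * X 2 ^ d) ^ 2) else 0, ?_, ?_⟩
    · intro j hj
      simp only [Finset.mem_Icc] at hj
      obtain ⟨hj1, hj2⟩ := hj
      interval_cases j
      · simp
      · simp only [if_pos rfl]
        refine neg_mem ?_
        have hpow : (X 1 * X 2 ^ d : MvPolynomial (Fin 3) k) ^ 2
            = (X 1 ^ 2 * X 2 ^ c) * X 2 ^ (2 * d - c) := by
          rw [mul_pow, ← pow_mul, mul_assoc, ← pow_add]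
          have : d * 2 = c + (2 * d - c) := by omega
          rw [this]
        rw [hpow, pow_two]
        refine Ideal.mul_mem_right _ _ (Ideal.mul_mem_mul ?_ ?_)
        · rw [hI]; exact Ideal.subset_span (by simp)
        · rw [hI]; exact Ideal.subset_span (by simp)
    · have hIcc : Finset.Icc 1 2 = ({1, 2} : Finset ℕ) := by decide
      rw [hIcc, Finset.sum_insert (by decide), Finset.sum_singleton]
      norm_num
  -- Part 2 : non-membership, via the coefficient at the monomial Y * Z^d
  have hnm : X 1 * X 2 ^ d ∉ I := by
    intro hmem
    set m : Fin 3 →₀ ℕ := Finsupp.single 1 1 + Finsupp.single 2 d with hm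
    have key : ∀ p ∈ I, ∀ r : MvPolynomial (Fin 3) k, coeff m (r * p) = 0 := by
      intro p hp
      rw [hI] at hp
      refine Submodule.span_induction ?_ ?_ ?_ ?_ hp
      · intro q hq
        simp only [Set.mem_insert_iff, Set.mem_singleton_iff] at hq
        have notle : ∀ e : Fin 3 →₀ ℕ,
            (d < e 2 ∨ 1 ≤ e 0 ∨ 2 ≤ e 1) → ¬ e ≤ m := by
          intro e he hle
          have hm0 : m 0 = 0 := by simp [hm, Finsupp.single_apply]
          have hm1 : m 1 = 1 := by simp [hm, Finsupp.single_apply]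
          have hm2 : m 2 = d := by simp [hm, Finsupp.single_apply]
          have h0 := Finsupp.le_def.mp hle 0
          have h1 := Finsupp.le_def.mp hle 1
          have h2 := Finsupp.le_def.mp hle 2
          rw [hm0] at h0; rw [hm1] at h1; rw [hm2] at h2
          omega
        rcases hq with rfl | rfl | rfl | rfl | rfl | rfl <;> intro r
        · rw [X_pow_eq_monomial]
          exact aux_mono r _ m (notle _ (by simp [Finsupp.single_apply]))
        · rw [X, X, monomial_mul, one_mul]
          exact aux_mono r _ m (notle _ (by simp [Finsupp.single_apply]))
        · rw [X_pow_eq_monomial]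
          exact aux_mono r _ m (notle _ (by simp [Finsupp.single_apply]))
        · rw [X_pow_eq_monomial]
          exact aux_mono r _ m (notle _ (by simp [Finsupp.single_apply]; omega))
        · rw [X, X_pow_eq_monomial, monomial_mul, one_mul]
          exact aux_mono r _ m (notle _ (by simp [Finsupp.single_apply]))
        · rw [X, X_pow_eq_monomial, monomial_mul, one_mul]
          exact aux_mono r _ m (notle _ (by simp [Finsupp.single_apply]; omega))
      · intro r; simp
      · intro x y _ _ hx hy r
        rw [mul_add, MvPolynomial.coeff_add, hx, hy, add_zero]
      · intro s x _ hx r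
        rw [smul_eq_mul, ← mul_assoc]
        exact hx (r * s)
    have h1 := key _ hmem 1
    rw [one_mul] at h1
    have : X 1 * X 2 ^ d = monomial m (1 : k) := by
      rw [hm, X, X_pow_eq_monomial, monomial_mul, one_mul]
    rw [this, coeff_monomial, if_pos rfl] at h1
    exact one_ne_zero h1
  exact ⟨hint, hnm, fun h => hnm (h _ hint)⟩
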